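/- Theorem: Let P be a rook placement on a rectangular Ferrers board. Then ins(pivR(P)) = (ins(P))⁻ and rec(pivR(P)) = (rec(P))⁻, where Y⁻ denotes the standard Young tableau Y with its top row removed. -/

import Mathlib

open scoped Classical

/-- A cell (square) of the grid: `(column, row)`, both `≥ 1` for genuine cells. -/
abbrev Cell : Type := ℕ × ℕ

/-- The rectangle `R(a,b)` consisting of all cells `(i,j)` with `1 ≤ i ≤ a`, `1 ≤ j ≤ b`. -/
def Rect (a b : ℕ) : Finset Cell := Finset.Icc 1 a ×ˢ Finset.Icc 1 b

/-- A Ferrers board (French notation): a down-left closed finite set of cells with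
positive coordinates. -/
def IsFerrers (F : Finset Cell) : Prop :=
  ∀ p ∈ F, 1 ≤ p.1 ∧ 1 ≤ p.2 ∧
    ∀ q : Cell, 1 ≤ q.1 → 1 ≤ q.2 → q.1 ≤ p.1 → q.2 ≤ p.2 → q ∈ F

/-- A rook placement on a board `F`: a subset of `F` with at most one cell in each
column and at most one cell in each row. -/
def IsPlacement (F P : Finset Cell) : Prop :=
  P ⊆ F ∧ (∀ p ∈ P, ∀ q ∈ P, p.1 = q.1 → p = q) ∧
    (∀ p ∈ P, ∀ q ∈ P, p.2 = q.2 → p = q)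

/-- A decreasing sequence in `P`: columns strictly increase, rows strictly decrease. -/
def IsDecSeq (P : Finset Cell) (k : ℕ) (S : Fin k → Cell) : Prop :=
  (∀ i, S i ∈ P) ∧ ∀ i j : Fin k, i < j → (S i).1 < (S j).1 ∧ (S j).2 < (S i).2

/-- An increasing sequence in `P`: columns and rows both strictly increase. -/
def IsIncSeq (P : Finset Cell) (k : ℕ) (S : Fin k → Cell) : Prop :=
  (∀ i, S i ∈ P) ∧ ∀ i j : Fin k, i < j → (S i).1 < (S j).1 ∧ (S i).2 < (S j).2

/-- Lexicographic comparison of two sequences of cells by their rows (values),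
entry by entry from the left. -/
def rowLexLE (k : ℕ) (S T : Fin k → Cell) : Prop :=
  (∀ i, (S i).2 = (T i).2) ∨
    ∃ i : Fin k, (S i).2 < (T i).2 ∧ ∀ j : Fin k, j < i → (S j).2 = (T j).2

/-- The condition for a left pivot in row `r`, column `c`, given the placement `P` and
the set `prev` of pivots already placed (in rows below `r`): the element of `P` in row
`r` has `c` strictly to its left, column `c` contains an element of `P` below row `r`,
and column `c` contains no pivot yet. -/
def pivCondL (P prev : Finset Cell) (r c : ℕ) : Prop :=
  (∃ x ∈ P, x.2 = r ∧ c < x.1) ∧ (∃ y ∈ P, y.1 = c ∧ y.2 < r) ∧ ∀ v ∈ prev, v.1 ≠ c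

/-- The condition for a right pivot in row `r`, column `c`. -/
def pivCondR (P prev : Finset Cell) (r c : ℕ) : Prop :=
  (∃ x ∈ P, x.2 = r ∧ x.1 < c) ∧ (∃ y ∈ P, y.1 = c ∧ y.2 < r) ∧ ∀ v ∈ prev, v.1 ≠ c

/-- The left pivots among rows `1,…,r`, built row by row from the bottom: no pivot in
the bottom row; in row `r ≥ 2`, if an admissible column exists, the pivot goes in the
rightmost one. -/
noncomputable def pivLAux (P : Finset Cell) : ℕ → Finset Cell
  | 0 => ∅
  | r + 1 =>
    let prev := pivLAux P r
    if r = 0 then prev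
    else if ∃ c, pivCondL P prev (r + 1) c then
      insert (sSup {c | pivCondL P prev (r + 1) c}, r + 1) prev
    else prev

/-- The right pivots among rows `1,…,r`: in row `r ≥ 2`, the pivot goes in the leftmost
admissible column. -/
noncomputable def pivRAux (P : Finset Cell) : ℕ → Finset Cell
  | 0 => ∅
  | r + 1 =>
    let prev := pivRAux P r
    if r = 0 then prev
    else if ∃ c, pivCondR P prev (r + 1) c then
      insert (sInf {c | pivCondR P prev (r + 1) c}, r + 1) prev
    else prev

/-- The left pivots `pivL(P)` of a placement `P` on a board with `n` rows. -/
noncomputable def pivL (n : ℕ) (P : Finset Cell) : Finset Cell := pivLAux P n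

/-- The right pivots `pivR(P)` of a placement `P` on a board with `n` rows. -/
noncomputable def pivR (n : ℕ) (P : Finset Cell) : Finset Cell := pivRAux P n

/-- Robinson–Schensted row insertion of a value `v` into one row: returns the new row
and the bumped value (`none` if `v` was appended at the right end). The leftmost entry
strictly larger than `v` is bumped. -/
def rowInsert (v : ℕ) : List ℕ → List ℕ × Option ℕ
  | [] => ([v], none)
  | x :: xs =>
    if v < x then (v :: xs, some x)
    else
      let p := rowInsert v xs
      (x :: p.1, p.2)

/-- Robinson–Schensted insertion of a value into a tableau (a list of rows, top row
first), bumping cascading down the rows. -/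
def tabInsert (v : ℕ) : List (List ℕ) → List (List ℕ)
  | [] => [[v]]
  | row :: rest =>
    match rowInsert v row with
    | (r, none) => r :: rest
    | (r, some b) => r :: tabInsert b rest

/-- The row of the (unique) cell of `P` in column `c`. -/
noncomputable def rowAt (P : Finset Cell) (c : ℕ) : ℕ := sSup {r | (c, r) ∈ P}

/-- The cells of the placement `P`, as (column, row) pairs listed in increasing order
of column: the two-line notation of the corresponding partial permutation. -/
noncomputable def rsSteps (P : Finset Cell) : List (ℕ × ℕ) :=
  ((P.image Prod.fst).sort (· ≤ ·)).map fun c => (c, rowAt P c)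

/-- The index of the (first) row where two tableaux have different lengths. -/
noncomputable def diffRow (T T' : List (List ℕ)) : ℕ :=
  sInf {r | (T.getD r []).length ≠ (T'.getD r []).length}

/-- Append the value `v` at the right end of row `r` of a tableau (creating a new
bottom row when `r` is one past the last row). -/
def placeAt (v : ℕ) : ℕ → List (List ℕ) → List (List ℕ)
  | 0, [] => [[v]]
  | 0, row :: rest => (row ++ [v]) :: rest
  | _ + 1, [] => [[v]]
  | r + 1, row :: rest => row :: placeAt v r rest

/-- The Robinson–Schensted insertion and recording tableaux of the partial permutation
determined by `P`, columns processed in increasing order. -/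
noncomputable def rsPair (P : Finset Cell) : List (List ℕ) × List (List ℕ) :=
  (rsSteps P).foldl
    (fun TR cv =>
      let T' := tabInsert cv.2 TR.1
      (T', placeAt cv.1 (diffRow TR.1 T') TR.2))
    ([], [])

/-- The Robinson–Schensted insertion tableau `ins(P)`. -/
noncomputable def insTab (P : Finset Cell) : List (List ℕ) := (rsPair P).1

/-- The Robinson–Schensted recording tableau `rec(P)`. -/
noncomputable def recTab (P : Finset Cell) : List (List ℕ) := (rsPair P).2


-- === (copy of W1, will merge later) ===
lemma rowInsert_cons (v x : ℕ) (xs : List ℕ) :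
    rowInsert v (x :: xs) =
      if v < x then (v :: xs, some x)
      else (x :: (rowInsert v xs).1, (rowInsert v xs).2) := by
  simp only [rowInsert]

lemma rowInsert_none (v : ℕ) : ∀ (row : List ℕ), (rowInsert v row).2 = none →
    (rowInsert v row).1 = row ++ [v] ∧ ∀ x ∈ row, ¬ v < x
  | [], _ => by simp [rowInsert]
  | x :: xs, h => by
    rw [rowInsert_cons] at h ⊢
    split at h
    · simp at h
    · rename_i hx
      simp only at h
      obtain ⟨h1, h2⟩ := rowInsert_none v xs h
      refine ⟨by rw [if_neg hx]; simp [h1], ?_⟩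
      intro y hy
      rcases List.mem_cons.1 hy with rfl | hy
      · exact hx
      · exact h2 y hy

lemma rowInsert_some (v b : ℕ) : ∀ (row : List ℕ), (rowInsert v row).2 = some b →
    v < b ∧ ∃ l₁ l₂, row = l₁ ++ b :: l₂ ∧ (rowInsert v row).1 = l₁ ++ v :: l₂ ∧
      ∀ x ∈ l₁, ¬ v < x
  | [], h => by simp [rowInsert] at h
  | x :: xs, h => by
    rw [rowInsert_cons] at h ⊢
    split at h
    · rename_i hx
      simp only [Option.some.injEq] at h
      subst h
      exact ⟨hx, [], xs, by simp [hx]⟩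
    · rename_i hx
      simp only at h
      obtain ⟨hvb, l₁, l₂, h1, h2, h3⟩ := rowInsert_some v b xs h
      refine ⟨hvb, x :: l₁, l₂, by simp [h1], by rw [if_neg hx]; simp [h2], ?_⟩
      intro y hy
      rcases List.mem_cons.1 hy with rfl | hy
      · exact hx
      · exact h3 y hy

lemma rowInsert_isSome (v x : ℕ) (row : List ℕ) (hx : x ∈ row) (hvx : v < x) :
    ∃ b, (rowInsert v row).2 = some b := by
  cases h : (rowInsert v row).2 with
  | none => exact absurd hvx ((rowInsert_none v row h).2 x hx)
  | some b => exact ⟨b, rfl⟩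

-- === stage 2 ===

lemma mem_rowInsert_self (v : ℕ) (row : List ℕ) : v ∈ (rowInsert v row).1 := by
  cases h : (rowInsert v row).2 with
  | none => rw [(rowInsert_none v row h).1]; simp
  | some b => obtain ⟨_, l₁, l₂, _, h2, _⟩ := rowInsert_some v b row h; rw [h2]; simp

lemma mem_of_mem_rowInsert (v x : ℕ) (row : List ℕ) (hx : x ∈ (rowInsert v row).1) :
    x = v ∨ x ∈ row := by
  cases h : (rowInsert v row).2 with
  | none =>
    rw [(rowInsert_none v row h).1] at hx
    rcases List.mem_append.1 hx with h' | h'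
    · exact Or.inr h'
    · exact Or.inl (by simpa using h')
  | some b =>
    obtain ⟨_, l₁, l₂, h1, h2, _⟩ := rowInsert_some v b row h
    rw [h2] at hx; rw [h1]
    simp only [List.mem_append, List.mem_cons] at hx ⊢
    tauto

lemma mem_rowInsert_of_mem (v x : ℕ) (row : List ℕ) (hx : x ∈ row)
    (hb : ∀ b, (rowInsert v row).2 = some b → x ≠ b) : x ∈ (rowInsert v row).1 := by
  cases h : (rowInsert v row).2 with
  | none => rw [(rowInsert_none v row h).1]; simp [hx]
  | some b =>
    obtain ⟨_, l₁, l₂, h1, h2, _⟩ := rowInsert_some v b row h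
    rw [h1] at hx; rw [h2]
    simp only [List.mem_append, List.mem_cons] at hx ⊢
    rcases hx with h' | h' | h'
    · tauto
    · exact absurd h' (hb b h)
    · tauto

lemma rowInsert_sorted (v : ℕ) (row : List ℕ) (hs : row.Pairwise (· < ·))
    (hv : v ∉ row) : ((rowInsert v row).1).Pairwise (· < ·) := by
  cases h : (rowInsert v row).2 with
  | none =>
    obtain ⟨h1, h2⟩ := rowInsert_none v row h
    rw [h1, List.pairwise_append]
    refine ⟨hs, by simp, ?_⟩
    intro x hx y hy
    have : y = v := by simpa using hy
    subst this
    exact lt_of_le_of_ne (not_lt.1 (h2 x hx)) (fun hxv => hv (hxv ▸ hx))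
  | some b =>
    obtain ⟨hvb, l₁, l₂, h1, h2, h3⟩ := rowInsert_some v b row h
    rw [h2]
    rw [h1] at hs hv
    obtain ⟨hs1, hs2, hs3⟩ := List.pairwise_append.1 hs
    obtain ⟨hs2a, hs2b⟩ := List.pairwise_cons.1 hs2
    refine List.pairwise_append.2 ⟨hs1, List.pairwise_cons.2
      ⟨fun y hy => lt_trans hvb (hs2a y hy), hs2b⟩, ?_⟩
    intro x hx y hy
    have hxv : x < v := lt_of_le_of_ne (not_lt.1 (h3 x hx))
      (fun hxv => hv (by simp [hxv ▸ hx]))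
    rcases List.mem_cons.1 hy with rfl | hy
    · exact hxv
    · exact lt_trans hxv (lt_trans hvb (hs2a y hy))

lemma rowInsert_min (v b x : ℕ) (row : List ℕ) (hs : row.Pairwise (· < ·))
    (h : (rowInsert v row).2 = some b) (hx : x ∈ row) (hvx : v < x) : b ≤ x := by
  obtain ⟨hvb, l₁, l₂, h1, h2, h3⟩ := rowInsert_some v b row h
  rw [h1] at hs hx
  rcases List.mem_append.1 hx with h' | h'
  · exact absurd hvx (h3 x h')
  · rcases List.mem_cons.1 h' with rfl | h'
    · exact le_refl x
    · rw [List.pairwise_append] at hs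
      exact le_of_lt ((List.pairwise_cons.1 hs.2.1).1 x h')

/-- The list of (column, bumped value) pairs produced by successively row-inserting
the values of `L` (labelled by columns) into the row `row`. -/
def bumps : List (ℕ × ℕ) → List ℕ → List (ℕ × ℕ)
  | [], _ => []
  | cv :: L, row =>
    match (rowInsert cv.2 row).2 with
    | none => bumps L (rowInsert cv.2 row).1
    | some b => (cv.1, b) :: bumps L (rowInsert cv.2 row).1

lemma bumps_cons_none (c v : ℕ) (L : List (ℕ × ℕ)) (row : List ℕ)
    (h : (rowInsert v row).2 = none) :
    bumps ((c, v) :: L) row = bumps L (rowInsert v row).1 := by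
  simp [bumps, h]

lemma bumps_cons_some (c v b : ℕ) (L : List (ℕ × ℕ)) (row : List ℕ)
    (h : (rowInsert v row).2 = some b) :
    bumps ((c, v) :: L) row = (c, b) :: bumps L (rowInsert v row).1 := by
  simp [bumps, h]

/-- The hypotheses maintained along the insertion process. -/
def Good (L : List (ℕ × ℕ)) (row : List ℕ) : Prop :=
  L.Pairwise (fun p q => p.1 < q.1) ∧ (L.map Prod.snd ++ row).Nodup ∧
    row.Pairwise (· < ·)

lemma Good.step (c v : ℕ) (L : List (ℕ × ℕ)) (row : List ℕ)
    (hg : Good ((c, v) :: L) row) : Good L (rowInsert v row).1 := by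
  obtain ⟨hp, hn, hs⟩ := hg
  simp only [List.map_cons, List.cons_append, List.nodup_cons, List.nodup_append,
    List.mem_append] at hn
  obtain ⟨hv, hnL, hnrow, hdisj⟩ := hn
  have hvrow : v ∉ row := fun h => hv (Or.inr h)
  have hvL : v ∉ L.map Prod.snd := fun h => hv (Or.inl h)
  refine ⟨(List.pairwise_cons.1 hp).2, ?_, rowInsert_sorted v row hs hvrow⟩
  rw [List.nodup_append]
  refine ⟨hnL, (rowInsert_sorted v row hs hvrow).nodup, ?_⟩
  intro x hxL _ hxrow hxy; subst hxy
  rcases mem_of_mem_rowInsert v x row hxrow with rfl | hx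
  · exact hvL hxL
  · exact hdisj _ hxL _ hx rfl

lemma eq_of_pairwise_not_rel {α : Type*} {R : α → α → Prop} : ∀ {l : List α},
    l.Pairwise R → ∀ {p q : α}, p ∈ l → q ∈ l → ¬ R p q → ¬ R q p → p = q
  | [], _, _, _, hp, _, _, _ => absurd hp (List.not_mem_nil)
  | a :: t, h, p, q, hp, hq, h1, h2 => by
    obtain ⟨ha, ht⟩ := List.pairwise_cons.1 h
    rcases List.mem_cons.1 hp with hp' | hp'
    · rcases List.mem_cons.1 hq with hq' | hq'
      · rw [hp', hq']
      · exact absurd (hp' ▸ ha q hq') h1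
    · rcases List.mem_cons.1 hq with hq' | hq'
      · exact absurd (hq' ▸ ha p hp') h2
      · exact eq_of_pairwise_not_rel ht hp' hq' h1 h2

lemma mem_bumps_cons (c₀ v₀ : ℕ) (L : List (ℕ × ℕ)) (row : List ℕ) (p : ℕ × ℕ)
    (hp : p ∈ bumps L (rowInsert v₀ row).1) : p ∈ bumps ((c₀, v₀) :: L) row := by
  cases h : (rowInsert v₀ row).2 with
  | none => rw [bumps_cons_none c₀ v₀ L row h]; exact hp
  | some b => rw [bumps_cons_some c₀ v₀ _ L row h]; exact List.mem_cons_of_mem _ hp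

lemma bumps_mem_fst : ∀ (L : List (ℕ × ℕ)) (row : List ℕ) (c b : ℕ),
    (c, b) ∈ bumps L row → ∃ v, (c, v) ∈ L ∧ v < b
  | [], row, c, b, h => by simp [bumps] at h
  | (c₀, v₀) :: L, row, c, b, hm => by
    cases h : (rowInsert v₀ row).2 with
    | none =>
      rw [bumps_cons_none c₀ v₀ L row h] at hm
      obtain ⟨v, hv, hvb⟩ := bumps_mem_fst L _ c b hm
      exact ⟨v, List.mem_cons_of_mem _ hv, hvb⟩
    | some b₀ =>
      rw [bumps_cons_some c₀ v₀ _ L row h] at hm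
      rcases List.mem_cons.1 hm with heq | hm
      · injection heq with h1 h2
        subst h1; subst h2
        exact ⟨v₀, List.mem_cons_self, (rowInsert_some v₀ b row h).1⟩
      · obtain ⟨v, hv, hvb⟩ := bumps_mem_fst L _ c b hm
        exact ⟨v, List.mem_cons_of_mem _ hv, hvb⟩

lemma bumps_pairwise_fst : ∀ (L : List (ℕ × ℕ)) (row : List ℕ),
    L.Pairwise (fun p q => p.1 < q.1) →
    (bumps L row).Pairwise (fun p q => p.1 < q.1)
  | [], row, _ => by simp [bumps]
  | (c₀, v₀) :: L, row, hL => by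
    obtain ⟨hhead, htail⟩ := List.pairwise_cons.1 hL
    have ih := bumps_pairwise_fst L (rowInsert v₀ row).1 htail
    cases h : (rowInsert v₀ row).2 with
    | none => rw [bumps_cons_none c₀ v₀ L row h]; exact ih
    | some b₀ =>
      rw [bumps_cons_some c₀ v₀ _ L row h]
      refine List.pairwise_cons.2 ⟨?_, ih⟩
      intro q hq
      obtain ⟨v, hv, _⟩ := bumps_mem_fst L _ q.1 q.2 hq
      exact hhead (q.1, v) hv

lemma bumps_source : ∀ (L : List (ℕ × ℕ)) (row : List ℕ), Good L row →
    ∀ c b, (c, b) ∈ bumps L row → b ∈ row ∨ ∃ c', c' < c ∧ (c', b) ∈ L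
  | [], row, _, c, b, h => by simp [bumps] at h
  | (c₀, v₀) :: L, row, hg, c, b, hm => by
    have hg' := Good.step c₀ v₀ L row hg
    have hlift : b ∈ (rowInsert v₀ row).1 ∨ (∃ c', c' < c ∧ (c', b) ∈ L) →
        (c, b) ∈ bumps L (rowInsert v₀ row).1 →
        b ∈ row ∨ ∃ c', c' < c ∧ (c', b) ∈ (c₀, v₀) :: L := by
      intro hin hmem
      rcases hin with hin | ⟨c', hc', hin⟩
      · rcases mem_of_mem_rowInsert v₀ b row hin with rfl | hin
        · refine Or.inr ⟨c₀, ?_, List.mem_cons_self⟩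
          obtain ⟨v, hv, _⟩ := bumps_mem_fst L _ c b hmem
          exact (List.pairwise_cons.1 hg.1).1 (c, v) hv
        · exact Or.inl hin
      · exact Or.inr ⟨c', hc', List.mem_cons_of_mem _ hin⟩
    cases h : (rowInsert v₀ row).2 with
    | none =>
      rw [bumps_cons_none c₀ v₀ L row h] at hm
      exact hlift (bumps_source L _ hg' c b hm) hm
    | some b₀ =>
      rw [bumps_cons_some c₀ v₀ _ L row h] at hm
      rcases List.mem_cons.1 hm with heq | hm
      · injection heq with h1 h2
        subst h1; subst h2
        obtain ⟨_, l₁, l₂, h1, _, _⟩ := rowInsert_some v₀ b row h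
        exact Or.inl (by rw [h1]; simp)
      · exact hlift (bumps_source L _ hg' c b hm) hm

lemma not_mem_rowInsert_bumped (v₀ b₀ : ℕ) (row : List ℕ) (hs : row.Pairwise (· < ·))
    (h : (rowInsert v₀ row).2 = some b₀) : b₀ ∉ (rowInsert v₀ row).1 := by
  obtain ⟨hvb, l₁, l₂, h1, h2, h3⟩ := rowInsert_some v₀ b₀ row h
  rw [h2]
  rw [h1] at hs
  obtain ⟨_, hb, hcross⟩ := List.pairwise_append.1 hs
  intro hmem
  rcases List.mem_append.1 hmem with h' | h'
  · exact lt_irrefl b₀ (hcross b₀ h' b₀ (List.mem_cons_self))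
  · rcases List.mem_cons.1 h' with h' | h'
    · exact lt_irrefl b₀ (h' ▸ hvb)
    · exact lt_irrefl b₀ ((List.pairwise_cons.1 hb).1 b₀ h')

lemma bumps_pairwise_snd : ∀ (L : List (ℕ × ℕ)) (row : List ℕ), Good L row →
    (bumps L row).Pairwise (fun p q => p.2 ≠ q.2)
  | [], row, _ => by simp [bumps]
  | (c₀, v₀) :: L, row, hg => by
    have hg' := Good.step c₀ v₀ L row hg
    have ih := bumps_pairwise_snd L (rowInsert v₀ row).1 hg'
    cases h : (rowInsert v₀ row).2 with
    | none => rw [bumps_cons_none c₀ v₀ L row h]; exact ih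
    | some b₀ =>
      rw [bumps_cons_some c₀ v₀ _ L row h]
      refine List.pairwise_cons.2 ⟨?_, ih⟩
      intro q hq heq
      simp only at heq
      obtain ⟨hvb, l₁, l₂, h1, h2, h3⟩ := rowInsert_some v₀ b₀ row h
      have hb₀row : b₀ ∈ row := by rw [h1]; simp
      have hnotrow' : b₀ ∉ (rowInsert v₀ row).1 :=
        not_mem_rowInsert_bumped v₀ b₀ row hg.2.2 h
      have hdisj : ∀ a ∈ ((c₀, v₀) :: L).map Prod.snd, a ∉ row :=
        fun a ha => fun har => (List.nodup_append.1 hg.2.1).2.2 a ha _ har rfl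
      rcases bumps_source L _ hg' q.1 q.2 (by simpa using hq) with hin | ⟨c', _, hin⟩
      · exact hnotrow' (by rw [heq]; exact hin)
      · refine hdisj b₀ ?_ hb₀row
        rw [List.map_cons]
        refine List.mem_cons_of_mem _ ?_
        rw [heq]
        exact List.mem_map.2 ⟨(c', q.2), hin, rfl⟩

lemma bumps_snd_inj (L : List (ℕ × ℕ)) (row : List ℕ) (hg : Good L row)
    {c c' b : ℕ} (h1 : (c, b) ∈ bumps L row) (h2 : (c', b) ∈ bumps L row) : c = c' := by
  have := eq_of_pairwise_not_rel (bumps_pairwise_snd L row hg) h1 h2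
    (by simp) (by simp)
  exact (Prod.ext_iff.1 this).1

lemma bumps_fst_inj (L : List (ℕ × ℕ)) (row : List ℕ)
    (hL : L.Pairwise (fun p q => p.1 < q.1))
    {c b b' : ℕ} (h1 : (c, b) ∈ bumps L row) (h2 : (c, b') ∈ bumps L row) : b = b' := by
  have := eq_of_pairwise_not_rel (bumps_pairwise_fst L row hL) h1 h2
    (by simp) (by simp)
  exact (Prod.ext_iff.1 this).2

lemma bumps_key : ∀ (L : List (ℕ × ℕ)) (row : List ℕ), Good L row →
    ∀ c v b, (c, v) ∈ L → v < b → (b ∈ row ∨ ∃ c', c' < c ∧ (c', b) ∈ L) →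
    (∃ c'', c'' ≤ c ∧ (c'', b) ∈ bumps L row) ∨
      ∃ b'', b'' < b ∧ (c, b'') ∈ bumps L row
  | [], _, _, _, _, _, hcv, _, _ => absurd hcv (List.not_mem_nil)
  | (c₀, v₀) :: L, row, hg, c, v, b, hcv, hvb, hb => by
    have hg' := Good.step c₀ v₀ L row hg
    have hpair := List.pairwise_cons.1 hg.1
    rcases List.mem_cons.1 hcv with heq | hcv
    · injection heq with e1 e2
      subst e1; subst e2
      have hbrow : b ∈ row := by
        rcases hb with hb | ⟨c', hc', hb⟩
        · exact hb
        · rcases List.mem_cons.1 hb with heq' | hb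
          · injection heq' with f1 f2
            exact absurd (f1 ▸ hc') (lt_irrefl c)
          · exact absurd (hpair.1 (c', b) hb) (not_lt.2 (le_of_lt hc'))
      obtain ⟨b₀, hb₀⟩ := rowInsert_isSome v b row hbrow hvb
      have hb₀b : b₀ ≤ b := rowInsert_min v b₀ b row hg.2.2 hb₀ hbrow hvb
      rw [bumps_cons_some c v b₀ L row hb₀]
      rcases eq_or_lt_of_le hb₀b with rfl | hlt
      · exact Or.inl ⟨c, le_refl c, List.mem_cons_self⟩
      · exact Or.inr ⟨b₀, hlt, List.mem_cons_self⟩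
    · have hc₀c : c₀ < c := hpair.1 (c, v) hcv
      have hstep : (b ∈ (rowInsert v₀ row).1 ∨ ∃ c', c' < c ∧ (c', b) ∈ L) ∨
          (∃ c'', c'' ≤ c ∧ (c'', b) ∈ bumps ((c₀, v₀) :: L) row) := by
        rcases hb with hb | ⟨c', hc', hb⟩
        · cases h : (rowInsert v₀ row).2 with
          | none =>
            exact Or.inl (Or.inl (mem_rowInsert_of_mem v₀ b row hb
              (fun b' h' => by rw [h] at h'; cases h')))
          | some b₀ =>
            by_cases hbb : b = b₀
            · subst hbb
              exact Or.inr ⟨c₀, le_of_lt hc₀c,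
                by rw [bumps_cons_some c₀ v₀ b L row h]; exact List.mem_cons_self⟩
            · refine Or.inl (Or.inl (mem_rowInsert_of_mem v₀ b row hb ?_))
              intro b' h'
              rw [h] at h'
              injection h' with e
              exact e ▸ hbb
        · rcases List.mem_cons.1 hb with heq' | hb
          · injection heq' with f1 f2
            subst f2
            exact Or.inl (Or.inl (mem_rowInsert_self b row))
          · exact Or.inl (Or.inr ⟨c', hc', hb⟩)
      rcases hstep with hstep | hdone
      · rcases bumps_key L _ hg' c v b hcv hvb hstep with ⟨c'', hc'', hm⟩ | ⟨b'', hb'', hm⟩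
        · exact Or.inl ⟨c'', hc'', mem_bumps_cons c₀ v₀ L row _ hm⟩
        · exact Or.inr ⟨b'', hb'', mem_bumps_cons c₀ v₀ L row _ hm⟩
      · exact Or.inl hdone

-- === stage 3 : tableau insertion mechanics ===

lemma tabInsert_cons (v : ℕ) (row : List ℕ) (rest : List (List ℕ)) :
    tabInsert v (row :: rest) = (rowInsert v row).1 ::
      (match (rowInsert v row).2 with
        | none => rest
        | some b => tabInsert b rest) := by
  simp only [tabInsert]
  rcases hro : rowInsert v row with ⟨r, o⟩
  cases o <;> simp [hro]

lemma tabInsert_cons_none (v : ℕ) (row : List ℕ) (rest : List (List ℕ))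
    (h : (rowInsert v row).2 = none) :
    tabInsert v (row :: rest) = (rowInsert v row).1 :: rest := by
  rw [tabInsert_cons, h]

lemma tabInsert_cons_some (v b : ℕ) (row : List ℕ) (rest : List (List ℕ))
    (h : (rowInsert v row).2 = some b) :
    tabInsert v (row :: rest) = (rowInsert v row).1 :: tabInsert b rest := by
  rw [tabInsert_cons, h]

lemma tabInsert_nil (v : ℕ) : tabInsert v [] = [[v]] := rfl

lemma tabInsert_headD (v : ℕ) (T : List (List ℕ)) :
    (tabInsert v T).headD [] = (rowInsert v (T.headD [])).1 := by
  cases T with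
  | nil => rfl
  | cons row rest =>
    cases h : (rowInsert v row).2 with
    | none => rw [List.headD_cons, tabInsert_cons_none v row rest h]; rfl
    | some b => rw [List.headD_cons, tabInsert_cons_some v b row rest h]; rfl

lemma tabInsert_tail_none (v : ℕ) (T : List (List ℕ))
    (h : (rowInsert v (T.headD [])).2 = none) : (tabInsert v T).tail = T.tail := by
  cases T with
  | nil => rfl
  | cons row rest => rw [tabInsert_cons_none v row rest h]; rfl

lemma tabInsert_tail_some (v b : ℕ) (T : List (List ℕ))
    (h : (rowInsert v (T.headD [])).2 = some b) :
    (tabInsert v T).tail = tabInsert b T.tail := by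
  cases T with
  | nil => simp [rowInsert] at h
  | cons row rest => rw [tabInsert_cons_some v b row rest h]; rfl

lemma rowInsert_length_none (v : ℕ) (row : List ℕ) (h : (rowInsert v row).2 = none) :
    (rowInsert v row).1.length = row.length + 1 := by
  rw [(rowInsert_none v row h).1]; simp

lemma rowInsert_length_some (v b : ℕ) (row : List ℕ)
    (h : (rowInsert v row).2 = some b) :
    (rowInsert v row).1.length = row.length := by
  obtain ⟨_, l₁, l₂, h1, h2, _⟩ := rowInsert_some v b row h
  rw [h2, h1]; simp

lemma tabInsert_shape_ne : ∀ (T : List (List ℕ)) (v : ℕ),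
    ∃ r, ((T.getD r []).length ≠ ((tabInsert v T).getD r []).length)
  | [], v => ⟨0, by simp [tabInsert]⟩
  | row :: rest, v => by
    cases h : (rowInsert v row).2 with
    | none =>
      refine ⟨0, ?_⟩
      rw [tabInsert_cons_none v row rest h]
      simp only [List.getD_cons_zero]
      rw [rowInsert_length_none v row h]
      omega
    | some b =>
      obtain ⟨r, hr⟩ := tabInsert_shape_ne rest b
      refine ⟨r + 1, ?_⟩
      rw [tabInsert_cons_some v b row rest h]
      rw [List.getD_cons_succ, List.getD_cons_succ]
      exact hr

lemma diffRow_tabInsert_none (v : ℕ) (T : List (List ℕ))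
    (h : (rowInsert v (T.headD [])).2 = none) : diffRow T (tabInsert v T) = 0 := by
  apply Nat.sInf_eq_zero.2
  left
  show (T.getD 0 []).length ≠ ((tabInsert v T).getD 0 []).length
  cases T with
  | nil => simp [tabInsert]
  | cons row rest =>
    rw [tabInsert_cons_none v row rest h]
    simp only [List.getD_cons_zero]
    rw [rowInsert_length_none v row h]
    omega

lemma diffRow_tabInsert_some (v b : ℕ) (T : List (List ℕ))
    (h : (rowInsert v (T.headD [])).2 = some b) :
    diffRow T (tabInsert v T) = diffRow T.tail (tabInsert b T.tail) + 1 := by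
  cases T with
  | nil => simp [rowInsert] at h
  | cons row rest =>
    rw [List.headD_cons] at h
    rw [tabInsert_cons_some v b row rest h]
    show diffRow (row :: rest) ((rowInsert v row).1 :: tabInsert b rest) =
      diffRow rest (tabInsert b rest) + 1
    unfold diffRow
    set S' : Set ℕ :=
      {r | (rest.getD r []).length ≠ ((tabInsert b rest).getD r []).length} with hS'
    set S : Set ℕ := {r | (((row :: rest).getD r []).length ≠
        ((((rowInsert v row).1 :: tabInsert b rest).getD r []).length))} with hS
    have hzero : (0 : ℕ) ∉ S := by
      intro h0
      have : ((row :: rest).getD 0 []).length ≠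
          (((rowInsert v row).1 :: tabInsert b rest).getD 0 []).length := h0
      rw [List.getD_cons_zero, List.getD_cons_zero, rowInsert_length_some v b row h] at this
      exact this rfl
    have hsucc : ∀ r : ℕ, (r + 1) ∈ S ↔ r ∈ S' := by
      intro r
      show (((row :: rest).getD (r + 1) []).length ≠ _) ↔ _
      rw [List.getD_cons_succ, List.getD_cons_succ]
      exact Iff.rfl
    have hS'ne : S'.Nonempty := tabInsert_shape_ne rest b
    set d' := sInf S' with hd'
    have hd'mem : d' ∈ S' := Nat.sInf_mem hS'ne
    have hmem : (d' + 1) ∈ S := (hsucc d').2 hd'mem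
    apply le_antisymm
    · exact Nat.sInf_le hmem
    · refine le_csInf ⟨d' + 1, hmem⟩ ?_
      intro k hk
      cases k with
      | zero => exact absurd hk hzero
      | succ k' => exact Nat.succ_le_succ (Nat.sInf_le ((hsucc k').1 hk))

lemma placeAt_zero_tail (c : ℕ) (R : List (List ℕ)) : (placeAt c 0 R).tail = R.tail := by
  cases R <;> rfl

lemma placeAt_succ (c d : ℕ) (r0 : List ℕ) (rs : List (List ℕ)) :
    placeAt c (d + 1) (r0 :: rs) = r0 :: placeAt c d rs := rfl

lemma placeAt_length : ∀ (R : List (List ℕ)) (c d : ℕ), d ≤ R.length →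
    (placeAt c d R).length = max R.length (d + 1)
  | [], c, d, hd => by
    obtain rfl : d = 0 := by simpa using hd
    simp [placeAt]
  | r0 :: rs, c, 0, _ => by simp [placeAt]
  | r0 :: rs, c, d + 1, hd => by
    rw [placeAt_succ]
    simp only [List.length_cons]
    rw [placeAt_length rs c d (by simpa using hd)]
    omega

lemma step_length : ∀ (T R : List (List ℕ)), T.length = R.length → ∀ v c,
    (tabInsert v T).length = (placeAt c (diffRow T (tabInsert v T)) R).length
  | [], R, hlen, v, c => by
    obtain rfl : R = [] := List.length_eq_zero_iff.1 hlen.symm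
    rw [diffRow_tabInsert_none v [] rfl]
    simp [tabInsert, placeAt]
  | row :: rest, R, hlen, v, c => by
    cases R with
    | nil => simp at hlen
    | cons r0 rs =>
      cases h : (rowInsert v row).2 with
      | none =>
        rw [diffRow_tabInsert_none v (row :: rest) h,
          tabInsert_cons_none v row rest h]
        show rest.length + 1 = ((r0 ++ [c]) :: rs).length
        simpa using hlen
      | some b =>
        rw [diffRow_tabInsert_some v b (row :: rest) h,
          tabInsert_cons_some v b row rest h]
        show (tabInsert b rest).length + 1 = (placeAt c (_ + 1) (r0 :: rs)).length
        rw [placeAt_succ]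
        simp only [List.length_cons, List.tail_cons]
        rw [← step_length rest rs (by simpa using hlen) b c]

/-- One step of the Robinson–Schensted fold. -/
noncomputable def rsStep (TR : List (List ℕ) × List (List ℕ)) (cv : ℕ × ℕ) :
    List (List ℕ) × List (List ℕ) :=
  (tabInsert cv.2 TR.1, placeAt cv.1 (diffRow TR.1 (tabInsert cv.2 TR.1)) TR.2)

lemma rsPair_eq (P : Finset Cell) : rsPair P = (rsSteps P).foldl rsStep ([], []) := rfl

lemma fold_tail : ∀ (L : List (ℕ × ℕ)) (T R : List (List ℕ)), T.length = R.length →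
    ((L.foldl rsStep (T, R)).1.tail, (L.foldl rsStep (T, R)).2.tail) =
      (bumps L (T.headD [])).foldl rsStep (T.tail, R.tail)
  | [], T, R, hlen => by simp [bumps]
  | (c, v) :: L, T, R, hlen => by
    rw [List.foldl_cons]
    have hstep : rsStep (T, R) (c, v) =
        (tabInsert v T, placeAt c (diffRow T (tabInsert v T)) R) := rfl
    rw [hstep]
    have hlen₁ : (tabInsert v T).length =
        (placeAt c (diffRow T (tabInsert v T)) R).length := step_length T R hlen v c
    have ih := fold_tail L (tabInsert v T) (placeAt c (diffRow T (tabInsert v T)) R) hlen₁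
    rw [tabInsert_headD v T] at ih
    cases h : (rowInsert v (T.headD [])).2 with
    | none =>
      rw [bumps_cons_none c v L (T.headD []) h]
      rw [ih, tabInsert_tail_none v T h, diffRow_tabInsert_none v T h,
        placeAt_zero_tail]
    | some b =>
      rw [bumps_cons_some c v b L (T.headD []) h, List.foldl_cons]
      have hT : T ≠ [] := by
        intro hT
        rw [hT] at h
        simp [rowInsert] at h
      obtain ⟨r0, rs, rfl⟩ : ∃ r0 rs, R = r0 :: rs := by
        cases R with
        | nil =>
          exfalso
          apply hT
          apply List.length_eq_zero_iff.1
          simpa using hlen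
        | cons r0 rs => exact ⟨r0, rs, rfl⟩
      rw [ih, tabInsert_tail_some v b T h, diffRow_tabInsert_some v b T h]
      have : (placeAt c (diffRow T.tail (tabInsert b T.tail) + 1) (r0 :: rs)).tail =
          placeAt c (diffRow T.tail (tabInsert b T.tail)) rs := by
        rw [placeAt_succ]
        rfl
      rw [this]
      rfl

-- === stage 4 : rsSteps of a placement, and pivRAux = bumped pairs ===

lemma pivRAux_succ (P : Finset Cell) (r : ℕ) :
    pivRAux P (r + 1) =
      if r = 0 then pivRAux P r
      else if ∃ c, pivCondR P (pivRAux P r) (r + 1) c then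
        insert (sInf {c | pivCondR P (pivRAux P r) (r + 1) c}, r + 1) (pivRAux P r)
      else pivRAux P r := by
  rw [pivRAux]

lemma rowAt_eq (P : Finset Cell) (hcol : ∀ p ∈ P, ∀ q ∈ P, p.1 = q.1 → p = q)
    {c r : ℕ} (h : (c, r) ∈ P) : rowAt P c = r := by
  unfold rowAt
  have hs : {r' | (c, r') ∈ P} = {r} := by
    ext r'
    simp only [Set.mem_setOf_eq, Set.mem_singleton_iff]
    constructor
    · intro h'
      exact congrArg Prod.snd (hcol _ h' _ h rfl)
    · rintro rfl; exact h
  rw [hs, csSup_singleton]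

lemma mem_rsSteps_iff (P : Finset Cell) (hcol : ∀ p ∈ P, ∀ q ∈ P, p.1 = q.1 → p = q)
    {c v : ℕ} : (c, v) ∈ rsSteps P ↔ (c, v) ∈ P := by
  unfold rsSteps
  rw [List.mem_map]
  constructor
  · rintro ⟨c', hc', heq⟩
    injection heq with e1 e2
    subst e1
    rw [Finset.mem_sort, Finset.mem_image] at hc'
    obtain ⟨p, hp, hpc⟩ := hc'
    have hmem : (c', p.2) ∈ P := by
      have : p = (c', p.2) := Prod.ext hpc rfl
      rwa [← this]
    rw [← e2, rowAt_eq P hcol hmem]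
    exact hmem
  · intro h
    refine ⟨c, ?_, ?_⟩
    · rw [Finset.mem_sort, Finset.mem_image]
      exact ⟨(c, v), h, rfl⟩
    · rw [rowAt_eq P hcol h]

lemma rsSteps_pairwise_fst (P : Finset Cell) :
    (rsSteps P).Pairwise (fun p q => p.1 < q.1) := by
  unfold rsSteps
  rw [List.pairwise_map]
  exact (Finset.sortedLT_sort _).pairwise

lemma good_rsSteps (P : Finset Cell) (hcol : ∀ p ∈ P, ∀ q ∈ P, p.1 = q.1 → p = q)
    (hrow : ∀ p ∈ P, ∀ q ∈ P, p.2 = q.2 → p = q) : Good (rsSteps P) [] := by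
  refine ⟨rsSteps_pairwise_fst P, ?_, by simp⟩
  rw [List.append_nil]
  unfold rsSteps
  rw [List.map_map]
  refine List.Nodup.map_on ?_ (Finset.sort_nodup _ _)
  intro x hx y hy hxy
  rw [Finset.mem_sort, Finset.mem_image] at hx hy
  obtain ⟨p, hp, hpc⟩ := hx
  obtain ⟨q, hq, hqc⟩ := hy
  have hxm : (x, rowAt P x) ∈ P := by
    have : p = (x, p.2) := Prod.ext hpc rfl
    rw [this] at hp
    rwa [rowAt_eq P hcol hp]
  have hym : (y, rowAt P y) ∈ P := by
    have : q = (y, q.2) := Prod.ext hqc rfl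
    rw [this] at hq
    rwa [rowAt_eq P hcol hq]
  have := hrow _ hxm _ hym (by simpa using hxy)
  exact congrArg Prod.fst this

lemma mem_Rect {a b : ℕ} {p : Cell} :
    p ∈ Rect a b ↔ (1 ≤ p.1 ∧ p.1 ≤ a) ∧ (1 ≤ p.2 ∧ p.2 ≤ b) := by
  unfold Rect
  rw [Finset.mem_product, Finset.mem_Icc, Finset.mem_Icc]

lemma bumped_facts (m n : ℕ) (P : Finset Cell) (hP : IsPlacement (Rect m n) P)
    {c b : ℕ} (h : (c, b) ∈ bumps (rsSteps P) []) :
    (∃ v, v < b ∧ (c, v) ∈ P) ∧ (∃ c', c' < c ∧ (c', b) ∈ P) ∧ 2 ≤ b ∧ b ≤ n := by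
  have hg := good_rsSteps P hP.2.1 hP.2.2
  obtain ⟨v, hvL, hvb⟩ := bumps_mem_fst (rsSteps P) [] c b h
  have hvP : (c, v) ∈ P := (mem_rsSteps_iff P hP.2.1).1 hvL
  have hsrc := bumps_source (rsSteps P) [] hg c b h
  rcases hsrc with hbad | ⟨c', hc'c, hc'L⟩
  · exact absurd hbad (List.not_mem_nil)
  have hc'P : (c', b) ∈ P := (mem_rsSteps_iff P hP.2.1).1 hc'L
  have h1 : 1 ≤ v := (mem_Rect.1 (hP.1 hvP)).2.1
  have h2 : b ≤ n := (mem_Rect.1 (hP.1 hc'P)).2.2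
  exact ⟨⟨v, hvb, hvP⟩, ⟨c', hc'c, hc'P⟩, by omega, h2⟩

lemma pivRAux_eq (m n : ℕ) (P : Finset Cell) (hP : IsPlacement (Rect m n) P) :
    ∀ r, pivRAux P r =
      (bumps (rsSteps P) []).toFinset.filter (fun p => p.2 ≤ r)
  | 0 => by
    rw [pivRAux]
    ext p
    simp only [Finset.notMem_empty, Finset.mem_filter, List.mem_toFinset, false_iff]
    rintro ⟨hm, hle⟩
    have := (bumped_facts m n P hP (show (p.1, p.2) ∈ _ from hm)).2.2.1
    omega
  | r + 1 => by
    have hg := good_rsSteps P hP.2.1 hP.2.2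
    rw [pivRAux_succ]
    by_cases hr0 : r = 0
    · subst hr0
      rw [if_pos rfl, pivRAux_eq m n P hP 0]
      ext p
      simp only [Finset.mem_filter, List.mem_toFinset]
      constructor
      · rintro ⟨hm, h0⟩
        have := (bumped_facts m n P hP (show (p.1, p.2) ∈ _ from hm)).2.2.1
        omega
      · rintro ⟨hm, h1⟩
        have := (bumped_facts m n P hP (show (p.1, p.2) ∈ _ from hm)).2.2.1
        omega
    · rw [if_neg hr0]
      have hprev := pivRAux_eq m n P hP r
      have hcondI : ∀ c, (c, r + 1) ∈ bumps (rsSteps P) [] →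
          pivCondR P (pivRAux P r) (r + 1) c := by
        intro c hm
        obtain ⟨⟨v, hvb, hvP⟩, ⟨c', hc'c, hc'P⟩, _, _⟩ := bumped_facts m n P hP hm
        refine ⟨⟨(c', r + 1), hc'P, rfl, hc'c⟩, ⟨(c, v), hvP, rfl, hvb⟩, ?_⟩
        intro u hu heq
        rw [hprev, Finset.mem_filter] at hu
        obtain ⟨huM, hule⟩ := hu
        rw [List.mem_toFinset] at huM
        have huM' : (c, u.2) ∈ bumps (rsSteps P) [] := by
          rw [← heq]
          exact huM
        have := bumps_fst_inj (rsSteps P) [] (rsSteps_pairwise_fst P) huM' hm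
        omega
      have hcondII : ∀ c₀, pivCondR P (pivRAux P r) (r + 1) c₀ →
          ∃ c, c ≤ c₀ ∧ (c, r + 1) ∈ bumps (rsSteps P) [] := by
        rintro c₀ ⟨⟨x, hxP, hx2, hx1⟩, ⟨y, hyP, hy1, hy2⟩, hfree⟩
        have hyL : (c₀, y.2) ∈ rsSteps P := by
          rw [mem_rsSteps_iff P hP.2.1]
          have : y = (c₀, y.2) := Prod.ext hy1 rfl
          rwa [← this]
        have hxL : (x.1, r + 1) ∈ rsSteps P := by
          rw [mem_rsSteps_iff P hP.2.1]
          have : x = (x.1, r + 1) := Prod.ext rfl hx2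
          rwa [← this]
        rcases bumps_key (rsSteps P) [] hg c₀ y.2 (r + 1) hyL hy2
            (Or.inr ⟨x.1, hx1, hxL⟩) with ⟨c'', hc'', hm⟩ | ⟨b'', hb'', hm⟩
        · exact ⟨c'', hc'', hm⟩
        · exfalso
          apply hfree (c₀, b'')
          · rw [hprev, Finset.mem_filter, List.mem_toFinset]
            exact ⟨hm, by omega⟩
          · rfl
      by_cases hex : ∃ c, pivCondR P (pivRAux P r) (r + 1) c
      · rw [if_pos hex]
        obtain ⟨c₀, hc₀⟩ := hex
        obtain ⟨cs, hcle, hcmem⟩ := hcondII c₀ hc₀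
        have hinf : sInf {c | pivCondR P (pivRAux P r) (r + 1) c} = cs := by
          apply le_antisymm
          · exact Nat.sInf_le (hcondI cs hcmem)
          · refine le_csInf ⟨cs, hcondI cs hcmem⟩ ?_
            intro k hk
            obtain ⟨c, hcle', hm'⟩ := hcondII k hk
            have : c = cs := bumps_snd_inj (rsSteps P) [] hg hm' hcmem
            omega
        rw [hinf, hprev]
        ext p
        simp only [Finset.mem_insert, Finset.mem_filter, List.mem_toFinset]
        constructor
        · rintro (rfl | ⟨hm, hle⟩)
          · exact ⟨hcmem, le_refl _⟩
          · exact ⟨hm, by omega⟩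
        · rintro ⟨hm, hle⟩
          rcases Nat.lt_or_ge p.2 (r + 1) with hlt | hge
          · exact Or.inr ⟨hm, by omega⟩
          · have hp2 : p.2 = r + 1 := by omega
            have hm' : (p.1, r + 1) ∈ bumps (rsSteps P) [] := by
              rw [← hp2]
              exact hm
            have : p.1 = cs := bumps_snd_inj (rsSteps P) [] hg hm' hcmem
            exact Or.inl (Prod.ext this hp2)
      · rw [if_neg hex, hprev]
        ext p
        simp only [Finset.mem_filter, List.mem_toFinset]
        constructor
        · rintro ⟨hm, hle⟩
          exact ⟨hm, by omega⟩
        · rintro ⟨hm, hle⟩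
          rcases Nat.lt_or_ge p.2 (r + 1) with hlt | hge
          · exact ⟨hm, by omega⟩
          · exfalso
            have hp2 : p.2 = r + 1 := by omega
            have hm' : (p.1, r + 1) ∈ bumps (rsSteps P) [] := by
              rw [← hp2]
              exact hm
            exact hex ⟨p.1, hcondI p.1 hm'⟩

lemma pivR_eq (m n : ℕ) (P : Finset Cell) (hP : IsPlacement (Rect m n) P) :
    pivR n P = (bumps (rsSteps P) []).toFinset := by
  unfold pivR
  rw [pivRAux_eq m n P hP n]
  ext p
  simp only [Finset.mem_filter, List.mem_toFinset, and_iff_left_iff_imp]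
  intro hm
  exact (bumped_facts m n P hP (show (p.1, p.2) ∈ _ from hm)).2.2.2

-- === stage 5 : rsSteps of the bumped set, and the final theorem ===

lemma rsSteps_toFinset (M : List (ℕ × ℕ)) (hpf : M.Pairwise (fun p q => p.1 < q.1)) :
    rsSteps M.toFinset = M := by
  have hfst_sorted : (M.map Prod.fst).Pairwise (· < ·) := List.pairwise_map.2 hpf
  have hfst_nodup : (M.map Prod.fst).Nodup := hfst_sorted.nodup
  have hcol : ∀ p ∈ M.toFinset, ∀ q ∈ M.toFinset, p.1 = q.1 → p = q := by
    intro p hp q hq hpq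
    rw [List.mem_toFinset] at hp hq
    exact eq_of_pairwise_not_rel hpf hp hq (by omega) (by omega)
  unfold rsSteps
  have himg : M.toFinset.image Prod.fst = (M.map Prod.fst).toFinset := by
    ext a
    simp only [Finset.mem_image, List.mem_toFinset, List.mem_map]
  rw [himg, (List.toFinset_sort (· ≤ ·) hfst_nodup).2
    (hfst_sorted.imp (fun h => le_of_lt h)), List.map_map]
  conv_rhs => rw [← List.map_id M]
  apply List.map_congr_left
  intro p hp
  show (p.1, rowAt M.toFinset p.1) = p
  have : rowAt M.toFinset p.1 = p.2 := by
    apply rowAt_eq M.toFinset hcol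
    rw [List.mem_toFinset]
    exact hp
  rw [this]

theorem ins_rec_pivR' (m n : ℕ) (P : Finset Cell) (hP : IsPlacement (Rect m n) P) :
    insTab (pivR n P) = (insTab P).tail ∧ recTab (pivR n P) = (recTab P).tail := by
  have hpf := bumps_pairwise_fst (rsSteps P) [] (rsSteps_pairwise_fst P)
  have hsteps : rsSteps (pivR n P) = bumps (rsSteps P) [] := by
    rw [pivR_eq m n P hP]
    exact rsSteps_toFinset _ hpf
  have hfold := fold_tail (rsSteps P) [] [] rfl
  constructor
  · show (rsPair (pivR n P)).1 = (rsPair P).1.tail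
    rw [rsPair_eq, rsPair_eq, hsteps]
    have := congrArg Prod.fst hfold
    simpa using this.symm
  · show (rsPair (pivR n P)).2 = (rsPair P).2.tail
    rw [rsPair_eq, rsPair_eq, hsteps]
    have := congrArg Prod.snd hfold
    simpa using this.symm


/-- **Theorem.** For a rook placement `P` on a rectangular Ferrers board,
`ins(pivR(P)) = (ins(P))⁻` and `rec(pivR(P)) = (rec(P))⁻`, where `Y⁻` removes the top
row of the tableau `Y`. -/
theorem ins_rec_pivR (m n : ℕ) (P : Finset Cell) (hP : IsPlacement (Rect m n) P) :
    insTab (pivR n P) = (insTab P).tail ∧ recTab (pivR n P) = (recTab P).tail :=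
  ins_rec_pivR' m n P hP
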